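/- In the polynomial ring ℂ[t], let A be the ℂ-subalgebra generated by {t², t⁵} and let B be the ℂ-subalgebra generated by {t² + t³, t⁵}. Then A and B are not isomorphic as ℂ-algebras. -/

import Mathlib

open Polynomial

lemma pow_struct {p q : Polynomial ℂ} (hp : p ≠ 0) (h : p ^ 5 = q ^ 2) :
    ∃ r : Polynomial ℂ, p = r ^ 2 ∧ q = r ^ 5 := by
  set K := FractionRing (Polynomial ℂ)
  set i := algebraMap (Polynomial ℂ) K with hi
  have hinj : Function.Injective i := IsFractionRing.injective _ _
  have hip : i p ≠ 0 := fun hh => hp (hinj (by simpa using hh))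
  set ρ : K := i q / (i p) ^ 2 with hρ
  have hρ2 : ρ ^ 2 = i p := by
    have h2 : (i q) ^ 2 = (i p) ^ 5 := by rw [← map_pow, ← map_pow, h]
    rw [hρ, div_pow, div_eq_iff (pow_ne_zero _ (pow_ne_zero _ hip))]
    rw [h2]; ring
  have hint : IsIntegral (Polynomial ℂ) ρ := by
    refine ⟨X ^ 2 - C p, monic_X_pow_sub_C _ (by norm_num), ?_⟩
    simp [eval₂_sub, hρ2, hi]
  obtain ⟨r, hr⟩ := IsIntegrallyClosed.isIntegral_iff.mp hint
  have hr2 : r ^ 2 = p := by apply hinj; rw [map_pow, hr, hρ2]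
  have hρ5 : ρ ^ 5 = i q := by
    have : ρ ^ 5 = (ρ ^ 2) ^ 2 * ρ := by ring
    rw [this, hρ2, hρ]; exact mul_div_cancel₀ _ (pow_ne_zero _ hip)
  have hr5 : r ^ 5 = q := by apply hinj; rw [map_pow, hr, hρ5]
  exact ⟨r, hr2.symm, hr5.symm⟩

lemma coeff_adjoin {g : Polynomial ℂ}
    (hg : g ∈ Algebra.adjoin ℂ ({Polynomial.X ^ 2, Polynomial.X ^ 5} : Set (Polynomial ℂ))) :
    g.coeff 1 = 0 ∧ g.coeff 3 = 0 := by
  induction hg using Algebra.adjoin_induction with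
  | mem x hx =>
    rcases hx with h | h <;> subst h <;>
      constructor <;> simp [coeff_X_pow]
  | algebraMap r =>
    constructor <;> simp [Polynomial.algebraMap_eq, coeff_C]
  | add x y _ _ hx hy =>
    exact ⟨by simp [hx.1, hy.1], by simp [hx.2, hy.2]⟩
  | mul x y _ _ hx hy =>
    constructor
    · rw [coeff_mul, Finset.Nat.sum_antidiagonal_eq_sum_range_succ_mk]
      simp [Finset.sum_range_succ, hx.1, hy.1]
    · rw [coeff_mul, Finset.Nat.sum_antidiagonal_eq_sum_range_succ_mk]
      simp [Finset.sum_range_succ, hx.1, hy.1, hx.2, hy.2]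

theorem stmt15 :
    IsEmpty
      ((Algebra.adjoin ℂ ({Polynomial.X ^ 2, Polynomial.X ^ 5} : Set (Polynomial ℂ))) ≃ₐ[ℂ]
        (Algebra.adjoin ℂ
          ({Polynomial.X ^ 2 + Polynomial.X ^ 3, Polynomial.X ^ 5} : Set (Polynomial ℂ)))) := by
  constructor
  intro e
  set A := Algebra.adjoin ℂ ({Polynomial.X ^ 2, Polynomial.X ^ 5} : Set (Polynomial ℂ)) with hA
  set B := Algebra.adjoin ℂ
      ({Polynomial.X ^ 2 + Polynomial.X ^ 3, Polynomial.X ^ 5} : Set (Polynomial ℂ)) with hB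
  set φ : A →ₐ[ℂ] Polynomial ℂ := B.val.comp e.toAlgHom with hφ
  have hφinj : Function.Injective φ := Subtype.val_injective.comp e.injective
  have h2 : (X : Polynomial ℂ) ^ 2 ∈ A := Algebra.subset_adjoin (Set.mem_insert _ _)
  have h5 : (X : Polynomial ℂ) ^ 5 ∈ A :=
    Algebra.subset_adjoin (Set.mem_insert_of_mem _ rfl)
  set p : Polynomial ℂ := φ ⟨X ^ 2, h2⟩ with hp
  set q : Polynomial ℂ := φ ⟨X ^ 5, h5⟩ with hq
  have hpq : p ^ 5 = q ^ 2 := by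
    rw [hp, hq, ← map_pow, ← map_pow]
    apply congrArg φ
    ext
    push_cast
    ring
  have hpne : p ≠ 0 := by
    intro h0
    have : (⟨X ^ 2, h2⟩ : A) = 0 := hφinj (by simpa using h0)
    have := congrArg Subtype.val this
    simpa using this
  obtain ⟨r, hr2, hr5⟩ := pow_struct hpne hpq
  -- range of φ lies in adjoin ℂ {r^2, r^5}
  have hrange : ∀ f : A, φ f ∈ Algebra.adjoin ℂ ({r ^ 2, r ^ 5} : Set (Polynomial ℂ)) := by
    rintro ⟨f, hf⟩
    induction hf using Algebra.adjoin_induction with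
    | mem x hx =>
      rcases hx with h | h
      · have : φ ⟨x, Algebra.subset_adjoin (by exact Or.inl h)⟩ = p :=
          congrArg φ (Subtype.ext h)
        rw [this, hr2]
        exact Algebra.subset_adjoin (Set.mem_insert _ _)
      · rw [Set.mem_singleton_iff] at h
        have : φ ⟨x, Algebra.subset_adjoin (by exact Or.inr h)⟩ = q :=
          congrArg φ (Subtype.ext h)
        rw [this, hr5]
        exact Algebra.subset_adjoin (Set.mem_insert_of_mem _ rfl)
    | algebraMap c => change φ (algebraMap ℂ A c) ∈ _; rw [AlgHom.commutes]; exact Subalgebra.algebraMap_mem _ _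
    | add x y hx' hy' hx hy => change φ (⟨x, hx'⟩ + ⟨y, hy'⟩) ∈ _; rw [map_add]; exact Subalgebra.add_mem _ hx hy
    | mul x y hx' hy' hx hy => rw [← MulMemClass.mk_mul_mk (S' := A) x y hx' hy', map_mul]; exact Subalgebra.mul_mem _ hx hy
  -- X^2 + X^3 is in the range of φ
  have hu : (X : Polynomial ℂ) ^ 2 + X ^ 3 ∈ B :=
    Algebra.subset_adjoin (Set.mem_insert _ _)
  have hXmem : (X : Polynomial ℂ) ^ 2 + X ^ 3 ∈
      Algebra.adjoin ℂ ({r ^ 2, r ^ 5} : Set (Polynomial ℂ)) := by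
    have : φ (e.symm ⟨_, hu⟩) = X ^ 2 + X ^ 3 := by
      rw [hφ]; simp
    rw [← this]; exact hrange _
  -- rewrite adjoin {r^2, r^5} as image under aeval r
  have himg : Algebra.adjoin ℂ ({r ^ 2, r ^ 5} : Set (Polynomial ℂ)) =
      Subalgebra.map (aeval r) A := by
    rw [hA, AlgHom.map_adjoin]
    congr 1
    rw [Set.image_insert_eq, Set.image_singleton, map_pow, map_pow, aeval_X]
  rw [himg] at hXmem
  obtain ⟨g, hgA, hgval⟩ := hXmem
  have hcomp : g.comp r = X ^ 2 + X ^ 3 := by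
    rw [comp_eq_aeval]; exact hgval
  have hdeg : g.natDegree * r.natDegree = 3 := by
    rw [← natDegree_comp, hcomp]
    compute_degree!
  have hgne : g ≠ 0 := by
    intro h0
    rw [h0, zero_comp] at hcomp
    have := congrArg (fun f => Polynomial.coeff f 3) hcomp
    simp [coeff_X_pow] at this
  obtain ⟨hc1, hc3⟩ := coeff_adjoin (hA ▸ hgA)
  have hlc := leadingCoeff_ne_zero.mpr hgne
  have hd : g.natDegree ∣ 3 := ⟨r.natDegree, hdeg.symm⟩
  rcases (Nat.Prime.eq_one_or_self_of_dvd Nat.prime_three _ hd) with h | h <;>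
    rw [Polynomial.leadingCoeff, h] at hlc
  · exact hlc hc1
  · exact hlc hc3
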